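/- arXiv:2104.04660 — 3 statements merged into one kernel-verified Lean document; each statement's English description precedes it below -/
import Mathlib

section
/- Let Ω be a nonempty finite type, let Θ be a set of parameters, and for each θ ∈ Θ let μ_θ : Ω → ℝ be a probability mass function (μ_θ(ω) ≥ 0 for all ω and ∑_{ω∈Ω} μ_θ(ω) = 1). Let S : Ω → ℝ be a statistic, and define the maximization (exact unconditional) p-value p(x) = sup_{θ∈Θ} ∑_{ω∈Ω, S(ω) ≥ S(x)} μ_θ(ω). Then p is a valid p-value: for every α ∈ [0,1] and every θ ∈ Θ, ∑_{x∈Ω, p(x) ≤ α} μ_θ(x) ≤ α. -/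
/-- The maximization (exact unconditional) p-value is a valid p-value. -/
theorem exact_unconditional_pvalue_valid
    {Ω : Type*} [Fintype Ω] [Nonempty Ω] {P : Type*} (Θ : Set P)
    (μ : P → Ω → ℝ)
    (hμ_nonneg : ∀ θ ∈ Θ, ∀ ω : Ω, 0 ≤ μ θ ω)
    (hμ_sum : ∀ θ ∈ Θ, ∑ ω : Ω, μ θ ω = 1)
    (S : Ω → ℝ)
    (p : Ω → ℝ)
    (hp : ∀ x : Ω, p x =
      sSup ((fun θ => ∑ ω ∈ Finset.univ.filter (fun ω => S x ≤ S ω), μ θ ω) '' Θ)) :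
    ∀ α ∈ Set.Icc (0 : ℝ) 1, ∀ θ ∈ Θ,
      ∑ x ∈ Finset.univ.filter (fun x => p x ≤ α), μ θ x ≤ α := by
  intro α hα θ hθ
  set A := Finset.univ.filter (fun x => p x ≤ α) with hA
  rcases A.eq_empty_or_nonempty with hAe | hAne
  · rw [hAe, Finset.sum_empty]; exact hα.1
  · obtain ⟨x₀, hx₀A, hx₀min⟩ := A.exists_min_image S hAne
    have hsub : A ⊆ Finset.univ.filter (fun ω => S x₀ ≤ S ω) := by
      intro x hx
      simp only [Finset.mem_filter, Finset.mem_univ, true_and]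
      exact hx₀min x hx
    have h1 : ∑ x ∈ A, μ θ x ≤
        ∑ ω ∈ Finset.univ.filter (fun ω => S x₀ ≤ S ω), μ θ ω :=
      Finset.sum_le_sum_of_subset_of_nonneg hsub
        (fun i _ _ => hμ_nonneg θ hθ i)
    have hbdd : BddAbove
        ((fun θ' => ∑ ω ∈ Finset.univ.filter (fun ω => S x₀ ≤ S ω), μ θ' ω) '' Θ) := by
      refine ⟨1, ?_⟩
      rintro y ⟨θ', hθ', rfl⟩
      calc ∑ ω ∈ Finset.univ.filter (fun ω => S x₀ ≤ S ω), μ θ' ω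
          ≤ ∑ ω : Ω, μ θ' ω :=
            Finset.sum_le_sum_of_subset_of_nonneg (Finset.filter_subset _ _)
              (fun i _ _ => hμ_nonneg θ' hθ' i)
        _ = 1 := hμ_sum θ' hθ'
    have h2 : ∑ ω ∈ Finset.univ.filter (fun ω => S x₀ ≤ S ω), μ θ ω ≤ p x₀ := by
      rw [hp x₀]
      exact le_csSup hbdd ⟨θ, hθ, rfl⟩
    have h3 : p x₀ ≤ α := (Finset.mem_filter.mp hx₀A).2
    linarith
end

section
/- Let Φ be the standard normal cumulative distribution function, α ∈ (0,2), and q ∈ ℝ with Φ(q) = 1 − α/2. Let f : ℝ → ℝ be strictly monotonically increasing (f(δ) represents the δ-projected Z-score Z_δ(x_T,x_C) at a fixed observed table), let δ₀ ∈ ℝ, and let δ_L^asy ∈ ℝ satisfy f(−δ_L^asy) = q (the asymptotic lower confidence bound). Define the asymptotic p-value p^asy = 1 − Φ(f(δ₀)). Then p^asy ≤ α/2 if and only if δ_L^asy ≥ −δ₀, and p^asy < α/2 if and only if δ_L^asy > −δ₀. -/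
open MeasureTheory ProbabilityTheory

lemma gaussianCDF_strictMono :
    StrictMono (fun t => ((gaussianReal 0 1) (Set.Iic t)).toReal) := by
  intro a b hab
  have hioc : (gaussianReal 0 1) (Set.Ioc a b) ≠ 0 := by
    intro h
    have hac := gaussianReal_absolutelyContinuous' 0 (v := 1) one_ne_zero
    have := hac h
    rw [Real.volume_Ioc] at this
    simp [ENNReal.ofReal_eq_zero, hab] at this
    linarith
  have hne : (gaussianReal 0 1) (Set.Iic b) ≠ ⊤ := measure_ne_top _ _
  have hsplit : Set.Iic a ∪ Set.Ioc a b = Set.Iic b := Set.Iic_union_Ioc_eq_Iic hab.le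
  have : (gaussianReal 0 1) (Set.Iic b)
      = (gaussianReal 0 1) (Set.Iic a) + (gaussianReal 0 1) (Set.Ioc a b) := by
    rw [← hsplit, measure_union _ measurableSet_Ioc]
    exact Set.Iic_disjoint_Ioc le_rfl
  simp only []
  rw [ENNReal.toReal_lt_toReal (measure_ne_top _ _) hne, this]
  exact ENNReal.lt_add_right (measure_ne_top _ _) hioc

/-- Theorem 2: the asymptotic p-value `p^asy = 1 - Φ(f δ₀)`
rejects at level `α/2` iff the asymptotic lower confidence bound `δ_L^asy`
(defined by `f (-δ_L^asy) = 𝔷_{1-α/2}`) exceeds `-δ₀`. -/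
theorem asy_pvalue_iff_asy_lower_bound
    (α : ℝ) (hα : α ∈ Set.Ioo (0 : ℝ) 2) (q : ℝ)
    (f : ℝ → ℝ) (hf : StrictMono f)
    (δ₀ δLasy : ℝ) (hδL : f (-δLasy) = q) :
    let Φ : ℝ → ℝ := fun t => ((gaussianReal 0 1) (Set.Iic t)).toReal
    Φ q = 1 - α / 2 →
      let pasy : ℝ := 1 - Φ (f δ₀)
      (pasy ≤ α / 2 ↔ -δ₀ ≤ δLasy) ∧ (pasy < α / 2 ↔ -δ₀ < δLasy) := by
  intro Φ hq pasy
  have hΦ : StrictMono Φ := gaussianCDF_strictMono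
  have key_le : pasy ≤ α / 2 ↔ -δ₀ ≤ δLasy := by
    have h1 : pasy ≤ α / 2 ↔ Φ q ≤ Φ (f δ₀) := by
      simp only [pasy, hq]; constructor <;> intro h <;> linarith
    rw [h1, hΦ.le_iff_le, ← hδL, hf.le_iff_le]
    constructor <;> intro h <;> linarith
  have key_lt : pasy < α / 2 ↔ -δ₀ < δLasy := by
    have h1 : pasy < α / 2 ↔ Φ q < Φ (f δ₀) := by
      simp only [pasy, hq]; constructor <;> intro h <;> linarith
    rw [h1, hΦ.lt_iff_lt, ← hδL, hf.lt_iff_lt]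
    constructor <;> intro h <;> linarith
  exact ⟨key_le, key_lt⟩
end

section
/- Let Φ be the standard normal cumulative distribution function, α ∈ (0,2), and q ∈ ℝ with Φ(q) = 1 − α/2. Let f : ℝ → ℝ be strictly monotonically increasing (f(δ) represents the exact-corrected δ-projected Z-score Z^EC_δ(x_T,x_C) at a fixed observed table), let δ₀ ∈ ℝ, let p ∈ (0,1) (the value of Chan's exact p-value p^exact(x_T,x_C)), and suppose Φ(f(δ₀)) = 1 − p, i.e. f(δ₀) = Φ⁻¹(1 − p). Let δ_L^EC ∈ ℝ satisfy f(−δ_L^EC) = q (the exact-corrected lower confidence bound). Then p ≤ α/2 if and only if δ_L^EC ≥ −δ₀, and p < α/2 if and only if δ_L^EC > −δ₀. -/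
open MeasureTheory ProbabilityTheory

/-- Theorem 4: Chan's exact p-value `p` rejects at level `α/2`
iff the exact-corrected lower confidence bound `δ_L^EC` (defined via the
exact-corrected δ-projected Z-score `f`, with `f (-δ_L^EC) = 𝔷_{1-α/2}` and
`Φ (f δ₀) = 1 - p`) exceeds `-δ₀`. -/
theorem exact_pvalue_iff_EC_lower_bound
    (α : ℝ) (hα : α ∈ Set.Ioo (0 : ℝ) 2) (q : ℝ)
    (f : ℝ → ℝ) (hf : StrictMono f)
    (δ₀ : ℝ) (p : ℝ) (hp : p ∈ Set.Ioo (0 : ℝ) 1)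
    (δLEC : ℝ) (hδL : f (-δLEC) = q) :
    let Φ : ℝ → ℝ := fun t => ((gaussianReal 0 1) (Set.Iic t)).toReal
    Φ q = 1 - α / 2 → Φ (f δ₀) = 1 - p →
      (p ≤ α / 2 ↔ -δ₀ ≤ δLEC) ∧ (p < α / 2 ↔ -δ₀ < δLEC) := by
  intro Φ hq hδ₀
  have hΦ : StrictMono Φ := gaussianCDF_strictMono
  constructor
  · constructor
    · intro h
      have h1 : Φ q ≤ Φ (f δ₀) := by rw [hq, hδ₀]; linarith
      have h2 : q ≤ f δ₀ := (hΦ.le_iff_le).mp h1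
      rw [← hδL] at h2
      have := (hf.le_iff_le).mp h2
      linarith
    · intro h
      have h2 : f (-δLEC) ≤ f δ₀ := hf.monotone (by linarith)
      rw [hδL] at h2
      have := (hΦ.le_iff_le).mpr h2
      rw [hq, hδ₀] at this
      linarith
  · constructor
    · intro h
      have h1 : Φ q < Φ (f δ₀) := by rw [hq, hδ₀]; linarith
      have h2 : q < f δ₀ := (hΦ.lt_iff_lt).mp h1
      rw [← hδL] at h2
      have := (hf.lt_iff_lt).mp h2
      linarith
    · intro h
      have h2 : f (-δLEC) < f δ₀ := hf (by linarith)
      rw [hδL] at h2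
      have := hΦ h2
      rw [hq, hδ₀] at this
      linarith
end
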